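/- Let C ∉ S₀ be a metabolite for which some explanation with respect to S₀ and R exists. Two rules Θ₁, Θ₂ ∈ R are mutually essential in S₀ for C if and only if (a) neither Θ₁ nor Θ₂ is essential in S₀ for C, and (b) every χ-path from S₀ in Gr((R,S₀)) leading to C contains a transition labeled by Θ₁ or a transition labeled by Θ₂. -/

import Mathlib

/-- A biochemical rule: either binary `A₁ ∘ A₂ → C` or unary `A → C`. -/
inductive Rule (M : Type) where
  | binary (a₁ a₂ c : M) : Rule M
  | unary (a c : M) : Rule M
  deriving DecidableEq

namespace Rule

/-- The conclusion (produced metabolite) of a rule. -/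
def concl {M : Type} : Rule M → M
  | .binary _ _ c => c
  | .unary _ c => c

/-- The premises of a rule, as a finite set. -/
def premises {M : Type} [DecidableEq M] : Rule M → Finset M
  | .binary a₁ a₂ _ => {a₁, a₂}
  | .unary a _ => {a}

/-- The premises of a rule, as a set. -/
def premSet {M : Type} : Rule M → Set M
  | .binary a₁ a₂ _ => {a₁, a₂}
  | .unary a _ => {a}

end Rule

/-- Explanation trees: leaves `C[]`, unary nodes `C_r[E]`, binary nodes `C_r[E₁,E₂]`. -/
inductive Expl (M : Type) where
  | leaf (c : M) : Expl M
  | node1 (r : Rule M) (e : Expl M) : Expl M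
  | node2 (r : Rule M) (e₁ e₂ : Expl M) : Expl M

namespace Expl

/-- The root metabolite of an explanation. -/
def root {M : Type} : Expl M → M
  | .leaf c => c
  | .node1 r _ => r.concl
  | .node2 r _ _ => r.concl

/-- `ℛ(E)`: the set of rules used by an explanation. -/
def rules {M : Type} : Expl M → Set (Rule M)
  | .leaf _ => ∅
  | .node1 r e => {r} ∪ e.rules
  | .node2 r e₁ e₂ => {r} ∪ e₁.rules ∪ e₂.rules

/-- `ℳ(E)`: the set of metabolites required by an explanation. -/
def mets {M : Type} : Expl M → Set M
  | .leaf c => {c}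
  | .node1 r e => r.premSet ∪ e.mets
  | .node2 r e₁ e₂ => r.premSet ∪ e₁.mets ∪ e₂.mets

/-- Subexplanation (subtree) relation. -/
inductive Sub {M : Type} : Expl M → Expl M → Prop where
  | refl (e : Expl M) : Sub e e
  | node1 {e e' : Expl M} {r : Rule M} : Sub e e' → Sub e (.node1 r e')
  | left {e e₁ e₂ : Expl M} {r : Rule M} : Sub e e₁ → Sub e (.node2 r e₁ e₂)
  | right {e e₁ e₂ : Expl M} {r : Rule M} : Sub e e₂ → Sub e (.node2 r e₁ e₂)

/-- An explanation is uniform if any two subexplanations with the same root metabolite coincide. -/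
def Uniform {M : Type} (E : Expl M) : Prop :=
  ∀ e₁ e₂ : Expl M, Sub e₁ E → Sub e₂ E → root e₁ = root e₂ → e₁ = e₂

end Expl

/-- `IsExpl S R C E`: `E` is an explanation for `C` w.r.t. initial solution `S` and m-network `R`. -/
inductive IsExpl {M : Type} (S : Finset M) (R : Finset (Rule M)) : M → Expl M → Prop where
  | leaf {c : M} : c ∈ S → IsExpl S R c (.leaf c)
  | node1 {a c : M} {e : Expl M} : Rule.unary a c ∈ R → IsExpl S R a e →
      IsExpl S R c (.node1 (Rule.unary a c) e)
  | node2 {a₁ a₂ c : M} {e₁ e₂ : Expl M} : Rule.binary a₁ a₂ c ∈ R →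
      IsExpl S R a₁ e₁ → IsExpl S R a₂ e₂ →
      IsExpl S R c (.node2 (Rule.binary a₁ a₂ c) e₁ e₂)

/-- A rule `r ∈ R` is essential in `S` for `C`. -/
def Essential {M : Type} [DecidableEq M] (S : Finset M) (R : Finset (Rule M))
    (r : Rule M) (C : M) : Prop :=
  (∃ E : Expl M, IsExpl S R C E) ∧ ¬ ∃ E : Expl M, IsExpl S (R.erase r) C E

/-- Rules `r₁, r₂ ∈ R` are mutually essential in `S` for `C`. -/
def MutuallyEssential {M : Type} [DecidableEq M] (S : Finset M) (R : Finset (Rule M))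
    (r₁ r₂ : Rule M) (C : M) : Prop :=
  (∃ E : Expl M, IsExpl S (R.erase r₁) C E) ∧
  (∃ E : Expl M, IsExpl S (R.erase r₂) C E) ∧
  ¬ ∃ E : Expl M, IsExpl S ((R.erase r₁).erase r₂) C E

section Paths

variable {M : Type} [DecidableEq M]

/-- A path in `Gr((R,S₀))`, represented by its list of transition rules from a starting state. -/
inductive IsPath (R : Finset (Rule M)) : Finset M → List (Rule M) → Prop where
  | nil (S : Finset M) : IsPath R S []
  | cons {S : Finset M} {r : Rule M} {rs : List (Rule M)} :
      r ∈ R → r.premises ⊆ S → IsPath R (insert r.concl S) rs → IsPath R S (r :: rs)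

/-- A χ-path: a path with no self-loop transitions (each step produces a genuinely new state). -/
inductive IsChiPath (R : Finset (Rule M)) : Finset M → List (Rule M) → Prop where
  | nil (S : Finset M) : IsChiPath R S []
  | cons {S : Finset M} {r : Rule M} {rs : List (Rule M)} :
      r ∈ R → r.premises ⊆ S → r.concl ∉ S →
      IsChiPath R (insert r.concl S) rs → IsChiPath R S (r :: rs)

/-- `LeadsTo C S rs`: the path `rs` from `S` leads to `C`, i.e. its last produced metabolite
is `C` and its final state is the first state containing `C`. -/
def LeadsTo (C : M) : Finset M → List (Rule M) → Prop
  | _, [] => False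
  | S, [r] => C ∉ S ∧ r.concl = C
  | S, r :: rs => C ∉ S ∧ LeadsTo C (insert r.concl S) rs

/-- The final state of a path. -/
def run (S : Finset M) : List (Rule M) → Finset M
  | [] => S
  | r :: rs => run (insert r.concl S) rs

/-- Auxiliary predicate for ρ-paths: `Xs` accumulates the previously produced metabolites,
`Us` the union of the previous `Ŝᵢ = premises Θᵢ ∩ S₀`, `S` is the current state. -/
def IsRhoAux (R : Finset (Rule M)) (S₀ : Finset M) :
    Finset M → Finset M → Finset M → List (Rule M) → Prop
  | _, _, _, [] => True
  | Xs, Us, S, r :: rs =>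
      r ∈ R ∧ r.premises ⊆ S ∧
      (r.concl ∈ S → r.concl ∈ S₀ ∧ r.concl ∉ Xs ∧ r.concl ∉ Us) ∧
      IsRhoAux R S₀ (insert r.concl Xs) (Us ∪ (r.premises ∩ S₀)) (insert r.concl S) rs

/-- A ρ-path from `S₀` in `Gr((R,S₀))`. -/
def IsRhoPath (R : Finset (Rule M)) (S₀ : Finset M) (rs : List (Rule M)) : Prop :=
  IsRhoAux R S₀ ∅ ∅ S₀ rs

/-- `Ŝ₁ ∪ ⋯ ∪ Ŝ_m`: the union of the parts of `S₀` used by the transitions of the path. -/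
def hatUnion (S₀ : Finset M) (rs : List (Rule M)) : Finset M :=
  rs.foldr (fun r acc => (r.premises ∩ S₀) ∪ acc) ∅

/-- `𝒰(p) = (Ŝ₁ ∪ ⋯ ∪ Ŝ_m) \ {X₁,…,X_m}`. -/
def usedMet (S₀ : Finset M) (rs : List (Rule M)) : Finset M :=
  hatUnion S₀ rs \ (rs.map Rule.concl).toFinset

end Paths

section Stmt9Aux

variable {M : Type} [DecidableEq M]

private lemma run_mono {S T : Finset M} (h : S ⊆ T) (rs : List (Rule M)) :
    run S rs ⊆ run T rs := by
  induction rs generalizing S T with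
  | nil => exact h
  | cons r rs ih => exact ih (Finset.insert_subset_insert _ h)

private lemma subset_run (S : Finset M) (rs : List (Rule M)) : S ⊆ run S rs := by
  induction rs generalizing S with
  | nil => exact fun _ h => h
  | cons r rs ih => exact (Finset.subset_insert _ _).trans (ih _)

private lemma isPath_mono {R' : Finset (Rule M)} {S : Finset M} {rs : List (Rule M)}
    (h : IsPath R' S rs) : ∀ {T : Finset M}, S ⊆ T → IsPath R' T rs := by
  induction h with
  | nil => exact fun _ => .nil _
  | cons hr hprem _ ih =>
    exact fun hST => .cons hr (hprem.trans hST) (ih (Finset.insert_subset_insert _ hST))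

private lemma run_append (S : Finset M) (rs₁ rs₂ : List (Rule M)) :
    run S (rs₁ ++ rs₂) = run (run S rs₁) rs₂ := by
  induction rs₁ generalizing S with
  | nil => rfl
  | cons r rs ih => exact ih _

private lemma isPath_append {R' : Finset (Rule M)} {S : Finset M} {rs₁ rs₂ : List (Rule M)}
    (h₁ : IsPath R' S rs₁) (h₂ : IsPath R' (run S rs₁) rs₂) :
    IsPath R' S (rs₁ ++ rs₂) := by
  induction h₁ with
  | nil => exact h₂
  | cons hr hprem _ ih => exact .cons hr hprem (ih h₂)

private lemma expl_to_path {R' : Finset (Rule M)} {S₀ : Finset M} {c : M} {E : Expl M}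
    (h : IsExpl S₀ R' c E) : ∃ rs, IsPath R' S₀ rs ∧ c ∈ run S₀ rs := by
  induction h with
  | @leaf c hc => exact ⟨[], .nil _, hc⟩
  | @node1 a c e hr _ ih =>
    obtain ⟨rs, hp, ha⟩ := ih
    refine ⟨rs ++ [Rule.unary a c], isPath_append hp (.cons hr ?_ (.nil _)), ?_⟩
    · simpa [Rule.premises] using ha
    · rw [run_append]; simp [run, Rule.concl]
  | @node2 a₁ a₂ c e₁ e₂ hr _ _ ih₁ ih₂ =>
    obtain ⟨rs₁, hp₁, ha₁⟩ := ih₁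
    obtain ⟨rs₂, hp₂, ha₂⟩ := ih₂
    refine ⟨rs₁ ++ (rs₂ ++ [Rule.binary a₁ a₂ c]),
      isPath_append hp₁ (isPath_append (isPath_mono hp₂ (subset_run _ _)) (.cons hr ?_ (.nil _))), ?_⟩
    · simp only [Rule.premises, Finset.insert_subset_iff, Finset.singleton_subset_iff]
      exact ⟨subset_run _ _ ha₁, run_mono (subset_run _ _) _ ha₂⟩
    · rw [run_append, run_append]; simp [run, Rule.concl]

private lemma path_to_chi {R' : Finset (Rule M)} {S : Finset M} {rs : List (Rule M)}
    (h : IsPath R' S rs) : ∃ rs', IsChiPath R' S rs' ∧ run S rs = run S rs' := by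
  induction h with
  | nil S => exact ⟨[], .nil _, rfl⟩
  | @cons S r rs hr hprem hrest ih =>
    by_cases hc : r.concl ∈ S
    · obtain ⟨rs', h1, h2⟩ := ih
      rw [Finset.insert_eq_self.mpr hc] at h1 h2
      refine ⟨rs', h1, ?_⟩
      show run (insert r.concl S) rs = run S rs'
      rw [Finset.insert_eq_self.mpr hc]
      exact h2
    · obtain ⟨rs', h1, h2⟩ := ih
      exact ⟨r :: rs', .cons hr hprem hc h1, h2⟩

private lemma chi_isPath {R' : Finset (Rule M)} {S : Finset M} {rs : List (Rule M)}
    (h : IsChiPath R' S rs) : IsPath R' S rs := by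
  induction h with
  | nil => exact .nil _
  | cons hr hp _ _ ih => exact .cons hr hp ih

private lemma chi_mem {R' : Finset (Rule M)} {S : Finset M} {rs : List (Rule M)}
    (h : IsChiPath R' S rs) : ∀ r ∈ rs, r ∈ R' := by
  induction h with
  | nil => simp
  | cons hr _ _ _ ih =>
    intro x hx
    rcases List.mem_cons.mp hx with h | h
    · exact h ▸ hr
    · exact ih x h

private lemma chi_restrict {R' R'' : Finset (Rule M)} {S : Finset M} {rs : List (Rule M)}
    (h : IsChiPath R' S rs) (hmem : ∀ r ∈ rs, r ∈ R'') : IsChiPath R'' S rs := by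
  induction h with
  | nil => exact .nil _
  | @cons S r rs hr hp hnc _ ih =>
    exact .cons (hmem r List.mem_cons_self) hp hnc
      (ih fun x hx => hmem x (List.mem_cons_of_mem _ hx))

private lemma chi_mono {R' R'' : Finset (Rule M)} (hsub : R' ⊆ R'') {S : Finset M}
    {rs : List (Rule M)} (h : IsChiPath R' S rs) : IsChiPath R'' S rs :=
  chi_restrict h fun r hr => hsub (chi_mem h r hr)

private lemma chi_leads {R' : Finset (Rule M)} {C : M} {S : Finset M} {rs : List (Rule M)}
    (h : IsChiPath R' S rs) : C ∈ run S rs → C ∉ S →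
    ∃ rs', IsChiPath R' S rs' ∧ LeadsTo C S rs' := by
  induction h with
  | nil S => exact fun hC hCS => absurd hC hCS
  | @cons S r rs hr hprem hnc hrest ih =>
    intro hC hCS
    by_cases hrc : r.concl = C
    · exact ⟨[r], .cons hr hprem hnc (.nil _), hCS, hrc⟩
    · have hCS' : C ∉ insert r.concl S := by
        simp only [Finset.mem_insert]
        rintro (h | h)
        · exact hrc h.symm
        · exact hCS h
      obtain ⟨rs', h1, h2⟩ := ih hC hCS'
      cases rs' with
      | nil => exact absurd h2 (by simp [LeadsTo])
      | cons r' rs'' =>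
        exact ⟨r :: r' :: rs'', .cons hr hprem hnc h1, hCS, h2⟩

private lemma leads_mem {C : M} : ∀ (S : Finset M) (rs : List (Rule M)),
    LeadsTo C S rs → C ∈ run S rs := by
  intro S rs
  induction rs generalizing S with
  | nil => exact fun h => h.elim
  | cons r rs ih =>
    cases rs with
    | nil => rintro ⟨_, h⟩; simp [run, h]
    | cons r' rs' => rintro ⟨_, h⟩; exact ih _ h

private lemma run_expl {R' : Finset (Rule M)} {S₀ : Finset M} {S : Finset M}
    {rs : List (Rule M)} (h : IsPath R' S rs) :
    (∀ m ∈ S, ∃ E, IsExpl S₀ R' m E) →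
    ∀ m ∈ run S rs, ∃ E, IsExpl S₀ R' m E := by
  induction h with
  | nil => exact fun hS => hS
  | @cons S r rs hr hprem _ ih =>
    intro hS
    apply ih
    intro m hm
    rcases Finset.mem_insert.mp hm with h | h
    · subst h
      cases r with
      | unary a c =>
        obtain ⟨E, hE⟩ := hS a (hprem (by simp [Rule.premises]))
        exact ⟨_, .node1 hr hE⟩
      | binary a₁ a₂ c =>
        obtain ⟨E₁, h₁⟩ := hS a₁ (hprem (by simp [Rule.premises]))
        obtain ⟨E₂, h₂⟩ := hS a₂ (hprem (by simp [Rule.premises]))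
        exact ⟨_, .node2 hr h₁ h₂⟩
    · exact hS m h

end Stmt9Aux

/-- for `C ∉ S₀` with some explanation, `Θ₁, Θ₂ ∈ R` are mutually essential
in `S₀` for `C` iff neither is essential and every χ-path from `S₀` leading to `C` contains
a transition labelled by `Θ₁` or by `Θ₂`. -/
theorem stmt9 {M : Type} [DecidableEq M] (R : Finset (Rule M)) (S₀ : Finset M) (C : M)
    (Θ₁ Θ₂ : Rule M) (hC : C ∉ S₀) (hex : ∃ E : Expl M, IsExpl S₀ R C E)
    (hΘ₁ : Θ₁ ∈ R) (hΘ₂ : Θ₂ ∈ R) :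
    MutuallyEssential S₀ R Θ₁ Θ₂ C ↔
      (¬ Essential S₀ R Θ₁ C ∧ ¬ Essential S₀ R Θ₂ C ∧
        ∀ rs : List (Rule M), IsChiPath R S₀ rs → LeadsTo C S₀ rs →
          (Θ₁ ∈ rs ∨ Θ₂ ∈ rs)) := by
  constructor
  · rintro ⟨he1, he2, hne⟩
    refine ⟨fun h => h.2 he1, fun h => h.2 he2, ?_⟩
    intro rs hchi hlead
    by_contra hcon
    push_neg at hcon
    have hmem : ∀ r ∈ rs, r ∈ (R.erase Θ₁).erase Θ₂ := by
      intro r hr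
      have := chi_mem hchi r hr
      refine Finset.mem_erase.mpr ⟨?_, Finset.mem_erase.mpr ⟨?_, this⟩⟩
      · rintro rfl; exact hcon.2 hr
      · rintro rfl; exact hcon.1 hr
    have hchi' : IsChiPath ((R.erase Θ₁).erase Θ₂) S₀ rs := chi_restrict hchi hmem
    have hCrun : C ∈ run S₀ rs := leads_mem _ _ hlead
    exact hne (run_expl (chi_isPath hchi')
      (fun m hm => ⟨Expl.leaf m, .leaf hm⟩) C hCrun)
  · rintro ⟨h1, h2, h3⟩
    refine ⟨?_, ?_, ?_⟩
    · by_contra h; exact h1 ⟨hex, h⟩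
    · by_contra h; exact h2 ⟨hex, h⟩
    · rintro ⟨E, hE⟩
      obtain ⟨rs, hp, hCr⟩ := expl_to_path hE
      obtain ⟨rs', hchi, hrun⟩ := path_to_chi hp
      rw [hrun] at hCr
      obtain ⟨rs'', hchi'', hlead⟩ := chi_leads hchi hCr hC
      have hall := chi_mem hchi''
      have := h3 rs'' (chi_mono (Finset.subset_iff.mpr fun x hx =>
        Finset.mem_of_mem_erase (Finset.mem_of_mem_erase hx)) hchi'') hlead
      rcases this with h | h
      · exact (Finset.mem_erase.mp (Finset.mem_of_mem_erase (hall _ h))).1 rfl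
      · exact (Finset.mem_erase.mp (hall _ h)).1 rfl
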